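/- Let G be a finite simple graph on a nonempty vertex set V that is vertex-transitive. Then ϑ(G) equals the supremum of the sum of all entries of M', taken only over those theta-feasible matrices M' that are invariant under every graph automorphism g of G (i.e. M'_{g(α), g(β)} = M'_{αβ} for all vertices α, β); moreover every such invariant theta-feasible matrix has all diagonal entries equal to 1/|V|. -/

import Mathlib

open scoped BigOperators

/-- A theta-feasible matrix for `G`: real symmetric PSD with trace 1 and vanishing on edges. -/
def ThetaFeasible {V : Type*} [Fintype V] (G : SimpleGraph V) (M : Matrix V V ℝ) : Prop :=
  M.IsSymm ∧ M.PosSemidef ∧ M.trace = 1 ∧ ∀ a b, G.Adj a b → M a b = 0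

/-- The Lovász theta function of `G`. -/
noncomputable def lovaszTheta {V : Type*} [Fintype V] (G : SimpleGraph V) : ℝ :=
  sSup {x : ℝ | ∃ M : Matrix V V ℝ, ThetaFeasible G M ∧ x = ∑ a, ∑ b, M a b}

/-- An H²-feasible matrix for `G`: real symmetric PSD, unit diagonal, vanishing on edges. -/
def H2Feasible {V : Type*} [Fintype V] (G : SimpleGraph V) (M : Matrix V V ℝ) : Prop :=
  M.IsSymm ∧ M.PosSemidef ∧ (∀ a, M a a = 1) ∧ ∀ a b, G.Adj a b → M a b = 0

/-- The block matrix N = [[1, vᵀ],[v, M]]. -/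
def blockN {V : Type*} [Fintype V] [DecidableEq V] (v : V → ℝ) (M : Matrix V V ℝ) :
    Matrix (Unit ⊕ V) (Unit ⊕ V) ℝ :=
  Matrix.fromBlocks 1 (Matrix.of fun _ b => v b) (Matrix.of fun a _ => v a) M

/-- An H-feasible pair for `G`. -/
def HFeasible {V : Type*} [Fintype V] [DecidableEq V] (G : SimpleGraph V)
    (v : V → ℝ) (M : Matrix V V ℝ) : Prop :=
  H2Feasible G M ∧ (blockN v M).PosSemidef

/-- `G` is vertex-transitive. -/
def VertexTransitive {V : Type*} (G : SimpleGraph V) : Prop :=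
  ∀ u w : V, ∃ g : G ≃g G, g u = w
private lemma mulVec_sum' {V I : Type*} [Fintype V] (s : Finset I)
    (A : I → Matrix V V ℝ) (y : V → ℝ) :
    (∑ g ∈ s, A g).mulVec y = ∑ g ∈ s, (A g).mulVec y := by
  ext i
  simp only [Matrix.mulVec, dotProduct, Matrix.sum_apply, Finset.sum_mul,
    Finset.sum_apply]
  exact Finset.sum_comm

private lemma dotProduct_sum' {V I : Type*} [Fintype V] (s : Finset I)
    (v : V → ℝ) (w : I → V → ℝ) :
    dotProduct v (∑ g ∈ s, w g) = ∑ g ∈ s, dotProduct v (w g) := by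
  simp only [dotProduct, Finset.sum_apply, Finset.mul_sum]
  exact Finset.sum_comm

theorem stmt5 {V : Type*} [Fintype V] [Nonempty V]
    (G : SimpleGraph V) (hG : VertexTransitive G) :
    (lovaszTheta G
        = sSup {x : ℝ | ∃ M : Matrix V V ℝ, ThetaFeasible G M ∧
            (∀ (g : G ≃g G) (a b : V), M (g a) (g b) = M a b) ∧
            x = ∑ a, ∑ b, M a b})
      ∧ ∀ M : Matrix V V ℝ, ThetaFeasible G M →
          (∀ (g : G ≃g G) (a b : V), M (g a) (g b) = M a b) →
          ∀ a, M a a = 1 / (Fintype.card V : ℝ) := by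

  classical
  haveI : Fintype (G ≃g G) :=
    Fintype.ofInjective (fun g => (g : V ≃ V))
      (fun g₁ g₂ h => RelIso.ext fun v => congrArg (fun e : V ≃ V => e v) h)
  haveI : Nonempty (G ≃g G) := ⟨RelIso.refl _⟩
  constructor
  · unfold lovaszTheta
    congr 1
    ext x
    simp only [Set.mem_setOf_eq]
    constructor
    · rintro ⟨M, hM, rfl⟩
      set n : ℕ := Fintype.card (G ≃g G) with hn
      have hn0 : 0 < n := Fintype.card_pos
      have hnR : (n : ℝ) ≠ 0 := Nat.cast_ne_zero.mpr hn0.ne'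
      set Mb : Matrix V V ℝ := (n : ℝ)⁻¹ • ∑ g : G ≃g G, M.submatrix g g with hMb
      have hMbapp : ∀ a b, Mb a b = (n : ℝ)⁻¹ * ∑ g : G ≃g G, M (g a) (g b) := by
        intro a b
        simp [hMb, Matrix.sum_apply, Matrix.submatrix_apply]
      refine ⟨Mb, ⟨?_, ?_, ?_, ?_⟩, ?_, ?_⟩
      · -- symmetric
        unfold Matrix.IsSymm
        ext a b
        simp only [Matrix.transpose_apply, hMbapp]
        congr 1
        refine Finset.sum_congr rfl fun g _ => ?_
        have := congrArg (fun N : Matrix V V ℝ => N (g a) (g b)) hM.1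
        simpa [Matrix.transpose_apply] using this
      · -- PSD
        refine Matrix.PosSemidef.of_dotProduct_mulVec_nonneg ?_ ?_
        · have h1 : Mb.IsHermitian := by
            refine Matrix.IsHermitian.ext fun i j => ?_
            simp only [hMbapp, star_trivial]
            congr 1
            refine Finset.sum_congr rfl fun g _ => ?_
            have := congrArg (fun N : Matrix V V ℝ => N (g i) (g j)) hM.1
            simpa [Matrix.transpose_apply] using this
          exact h1
        · intro y
          have h2 : Mb.mulVec y
              = (n : ℝ)⁻¹ • ∑ g : G ≃g G, (M.submatrix g g).mulVec y := by
            rw [hMb, Matrix.smul_mulVec, mulVec_sum']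
          rw [h2, dotProduct_smul, dotProduct_sum']
          rw [smul_eq_mul]
          refine mul_nonneg (by positivity) (Finset.sum_nonneg fun g _ => ?_)
          have := (hM.2.1.submatrix (g : V → V)).dotProduct_mulVec_nonneg (y)
          simpa using this
      · -- trace
        have htr : ∀ g : G ≃g G, (M.submatrix g g).trace = 1 := by
          intro g
          have h3 : (M.submatrix (g : V → V) g).trace = ∑ a, M (g a) (g a) := by
            simp [Matrix.trace, Matrix.diag]
          rw [h3, Fintype.sum_bijective (⇑g) g.bijective _ (fun a => M a a) (fun a => rfl)]
          exact hM.2.2.1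
        simp [hMb, Matrix.trace_smul, Matrix.trace_sum, htr, hnR]
        exact inv_mul_cancel₀ hnR
      · -- edges
        intro a b hab
        rw [hMbapp]
        have : ∀ g : G ≃g G, M (g a) (g b) = 0 := fun g =>
          hM.2.2.2 _ _ (g.map_adj_iff.mpr hab)
        simp [this]
      · -- invariance
        intro h a b
        rw [hMbapp, hMbapp]
        congr 1
        have hb : Function.Bijective (fun g : G ≃g G => h.trans g) := by
          constructor
          · intro g₁ g₂ hg
            have := congrArg (fun g : G ≃g G => h.symm.trans g) hg
            simpa using (RelIso.ext fun v => by
              have := congrArg (fun g : G ≃g G => g (h.symm v)) hg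
              simpa using this : g₁ = g₂)
          · intro g
            exact ⟨h.symm.trans g, RelIso.ext fun v => by simp⟩
        exact (Fintype.sum_bijective _ hb _
          (fun g : G ≃g G => M (g a) (g b)) (fun g => rfl)).symm ▸
          (Fintype.sum_bijective (fun g : G ≃g G => h.trans g) hb
            (fun g : G ≃g G => M (g (h a)) (g (h b)))
            (fun g : G ≃g G => M (g a) (g b)) (fun g => rfl))
      · -- same sum
        have hsum : ∀ g : G ≃g G, ∑ a, ∑ b, M (g a) (g b) = ∑ a, ∑ b, M a b := by
          intro g
          rw [Fintype.sum_bijective (⇑g) g.bijective _ (fun a => ∑ b, M a (g b)) (fun a => rfl)]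
          exact Finset.sum_congr rfl fun a _ =>
            Fintype.sum_bijective (⇑g) g.bijective _ (fun b => M a b) (fun b => rfl)
        have : ∑ a, ∑ b, Mb a b
            = (n : ℝ)⁻¹ * ∑ g : G ≃g G, ∑ a, ∑ b, M (g a) (g b) := by
          simp only [hMbapp, ← Finset.mul_sum]
          congr 1
          calc ∑ a : V, ∑ b : V, ∑ g : G ≃g G, M (g a) (g b)
              = ∑ a : V, ∑ g : G ≃g G, ∑ b : V, M (g a) (g b) :=
                Finset.sum_congr rfl fun a _ => Finset.sum_comm
            _ = ∑ g : G ≃g G, ∑ a : V, ∑ b : V, M (g a) (g b) := Finset.sum_comm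
        rw [this]
        simp only [hsum, Finset.sum_const, Finset.card_univ, nsmul_eq_mul]
        rw [← mul_assoc, inv_mul_cancel₀ hnR, one_mul]
    · rintro ⟨M, hM, _, rfl⟩
      exact ⟨M, hM, rfl⟩
  · intro M hM hinv a
    have hdiag : ∀ b : V, M b b = M a a := by
      intro b
      obtain ⟨g, hg⟩ := hG a b
      rw [← hg, hinv g a a]
    have h1 : (1 : ℝ) = (Fintype.card V : ℝ) * M a a := by
      have := hM.2.2.1
      rw [Matrix.trace] at this
      calc (1 : ℝ) = ∑ b, M b b := by simpa [Matrix.diag] using this.symm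
        _ = ∑ _b : V, M a a := Finset.sum_congr rfl fun b _ => hdiag b
        _ = (Fintype.card V : ℝ) * M a a := by simp [Finset.card_univ, mul_comm]
    have hc : (Fintype.card V : ℝ) ≠ 0 := Nat.cast_ne_zero.mpr Fintype.card_ne_zero
    field_simp [hc] at h1 ⊢
    linarith
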